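/- Fix an integer N ≥ 2, L > 0, a := 1/N. Regard the discrete energy E^N as a smooth function of (x₁, …, x_N) on the open set { x ∈ ℝ^N : x₁ < x₂ < ⋯ < x_N < x₁ + L }, with the conventions x₀ := x_N − L and x_{N+1} := x₁ + L. Then for every i ∈ {1, …, N}, ∂E^N/∂x_i = a · f_i, where f_i := −(2πa/L²)·Σ_{j=1, j≠i}^{N} cot(π(x_j−x_i)/L) + (1/(x_{i+1}−x_i) − 1/(x_i−x_{i−1})) + (a²/(x_{i+1}−x_i)³ − a²/(x_i−x_{i−1})³). Hence the step-flow ODE is the gradient flow structure dx_i/dt = (1/a)·[(f_{i+1}−f_i)/(x_{i+1}−x_i) − (f_i−f_{i−1})/(x_i−x_{i−1})] with f_i = (1/a)·∂E^N/∂x_i. -/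

import Mathlib

open Real Filter Topology

/-- Periodic extension of a vector `(v 1, …, v N)` to a configuration on `ℤ`, implementing the
conventions `x₀ = x_N − L`, `x_{N+1} = x₁ + L` (and more generally `x_{i+N} = x_i + L`):
for `i ∈ {1, …, N}` one has `extPer N L v i = v i`. -/
noncomputable def extPer (N : ℕ) (L : ℝ) (v : ℤ → ℝ) (i : ℤ) : ℝ :=
  v ((i - 1) % (N:ℤ) + 1) + L * (((i - 1) / (N:ℤ) : ℤ) : ℝ)

/-- The chemical potential `f_i` of a (periodic) step configuration `c : ℤ → ℝ`, `a := 1/N`;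
the lattice sum is over the period window `j ∈ {i+1, …, i+N−1}`, which by `π`-periodicity of
`cot` agrees with `Σ_{j=1,j≠i}^N`. -/
noncomputable def fchem (N : ℕ) (L : ℝ) (c : ℤ → ℝ) (i : ℤ) : ℝ :=
  -(2 * π * (N:ℝ)⁻¹ / L ^ 2) *
      (∑ j ∈ Finset.Ico (i + 1) (i + (N:ℤ)), Real.cot (π * (c j - c i) / L))
    + (1 / (c (i + 1) - c i) - 1 / (c i - c (i - 1)))
    + ((N:ℝ)⁻¹ ^ 2 / (c (i + 1) - c i) ^ 3 - (N:ℝ)⁻¹ ^ 2 / (c i - c (i - 1)) ^ 3)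

/-- The discrete energy `E^N`, `a = 1/N`, with convention `c_{N+1} = c_1 + L`. -/
noncomputable def energyN (N : ℕ) (L : ℝ) (c : ℤ → ℝ) : ℝ :=
  (N:ℝ)⁻¹ ^ 2 * ∑ i ∈ Finset.Icc (1:ℤ) (N:ℤ), ∑ j ∈ Finset.Ioc i (N:ℤ),
      (2 / L) * Real.log |Real.sin (π * (c j - c i) / L)|
    + (N:ℝ)⁻¹ * ∑ i ∈ Finset.Icc (1:ℤ) (N:ℤ),
      (-Real.log ((c (i + 1) - c i) * (N:ℝ)) + ((N:ℝ)⁻¹ ^ 2 / 2) / (c (i + 1) - c i) ^ 2)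

lemma cot_neg' (x : ℝ) : Real.cot (-x) = - Real.cot x := by
  simp [Real.cot_eq_cos_div_sin, neg_div, div_neg]

lemma cot_add_pi (x : ℝ) : Real.cot (x + π) = Real.cot x := by
  simp [Real.cot_eq_cos_div_sin, Real.sin_add, Real.cos_add, neg_div_neg_eq]


noncomputable def indC (N : ℕ) (i k : ℤ) : ℝ := if (k-1) % (N:ℤ) + 1 = i then 1 else 0

lemma extPer_eq (N : ℕ) (L : ℝ) (u : ℤ → ℝ) (k : ℤ) (h1 : 1 ≤ k) (h2 : k ≤ (N:ℤ)) :
    extPer N L u k = u k := by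
  have h3 : (k-1) % (N:ℤ) = k - 1 := Int.emod_eq_of_lt (by omega) (by omega)
  have h4 : (k-1) / (N:ℤ) = 0 := Int.ediv_eq_zero_of_lt (by omega) (by omega)
  simp [extPer, h3, h4]

lemma extPer_add (N : ℕ) (hN : 0 < N) (L : ℝ) (u : ℤ → ℝ) (k : ℤ) :
    extPer N L u (k + N) = extPer N L u k + L := by
  have hN' : (N:ℤ) ≠ 0 := by exact_mod_cast hN.ne'
  have e : k + (N:ℤ) - 1 = (k-1) + 1 * N := by ring
  have h1 : (k + N - 1) % (N:ℤ) = (k-1) % N := by rw [e, Int.add_mul_emod_self_right]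
  have h2 : (k + N - 1) / (N:ℤ) = (k-1)/N + 1 := by rw [e, Int.add_mul_ediv_right _ _ hN']
  simp only [extPer, h1, h2]
  push_cast
  ring

lemma hasDerivAt_extPer (N : ℕ) (L : ℝ) (v : ℤ → ℝ) (i k : ℤ) (x : ℝ) :
    HasDerivAt (fun s => extPer N L (Function.update v i s) k) (indC N i k) x := by
  have key : ∀ s : ℝ, extPer N L (Function.update v i s) k
      = (if (k-1) % (N:ℤ) + 1 = i then s else v ((k-1) % (N:ℤ) + 1))
        + L * (((k - 1) / (N:ℤ) : ℤ) : ℝ) := by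
    intro s; rw [extPer, Function.update_apply]
  simp only [key, indC]
  by_cases h : (k-1) % (N:ℤ) + 1 = i
  · simp only [if_pos h]
    simpa using (hasDerivAt_id x).add_const (L * (((k - 1) / (N:ℤ) : ℤ) : ℝ))
  · simp only [if_neg h]
    exact hasDerivAt_const _ _

lemma hasDerivAt_logabs_sin (L : ℝ) (f : ℝ → ℝ) {f' w₀ : ℝ} {x : ℝ}
    (hf : HasDerivAt f f' x) (hfx : f x = w₀) (hsin : Real.sin w₀ ≠ 0) :
    HasDerivAt (fun s => (2/L) * Real.log |Real.sin (f s)|)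
      ((2/L) * (Real.cot w₀ * f')) x := by
  have h0 : HasDerivAt (fun s => Real.sin (f s)) (Real.cos w₀ * f') x := by
    have := (Real.hasDerivAt_sin (f x)).comp x hf
    rwa [hfx] at this
  have hsin' : Real.sin (f x) ≠ 0 := by rw [hfx]; exact hsin
  have h1 : HasDerivAt (fun s => Real.log (Real.sin (f s)))
      ((Real.sin w₀)⁻¹ * (Real.cos w₀ * f')) x := by
    have := (Real.hasDerivAt_log hsin').comp x h0
    rwa [hfx] at this
  have h2 : (fun s => (2/L) * Real.log |Real.sin (f s)|)
      = fun s => (2/L) * Real.log (Real.sin (f s)) := by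
    funext s; rw [Real.log_abs]
  rw [h2]
  have h3 := h1.const_mul (2/L)
  refine h3.congr_deriv ?_
  rw [Real.cot_eq_cos_div_sin]
  ring

lemma hasDerivAt_step (a2 b : ℝ) (d : ℝ → ℝ) {d' d₀ : ℝ} {x : ℝ}
    (hd : HasDerivAt d d' x) (hdx : d x = d₀) (h0 : d₀ ≠ 0) (hb : b ≠ 0) :
    HasDerivAt (fun s => -Real.log (d s * b) + (a2 / 2) / (d s)^2)
      ((-(1/d₀) - a2/d₀^3) * d') x := by
  have hmul : HasDerivAt (fun s => d s * b) (d' * b) x := hd.mul_const b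
  have hlogne : d x * b ≠ 0 := by rw [hdx]; exact mul_ne_zero h0 hb
  have hlog : HasDerivAt (fun s => Real.log (d s * b)) ((d₀ * b)⁻¹ * (d' * b)) x := by
    have := (Real.hasDerivAt_log hlogne).comp x hmul
    rwa [hdx] at this
  have hpow : HasDerivAt (fun s => (d s)^2) ((2:ℝ) * d₀ ^ 1 * d') x := by
    have := hd.pow 2
    rw [hdx] at this
    norm_num at this ⊢
    exact this
  have hinv : HasDerivAt (fun s => ((d s)^2)⁻¹) (-((2:ℝ) * d₀ ^ 1 * d') / (d₀^2)^2) x := by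
    have := hpow.inv (by simpa [hdx] using pow_ne_zero 2 h0)
    refine this.congr_deriv ?_
    simp [hdx]
  have hdiv : HasDerivAt (fun s => (a2/2) / (d s)^2)
      ((a2/2) * (-((2:ℝ) * d₀ ^ 1 * d') / (d₀^2)^2)) x := by
    have h := hinv.const_mul (a2/2)
    have e : (fun s => (a2/2) / (d s)^2) = fun s => (a2/2) * ((d s)^2)⁻¹ := by
      funext s; rw [div_eq_mul_inv]
    rw [e]; exact h
  have := hlog.neg.add hdiv
  refine this.congr_deriv ?_
  field_simp
  ring

/-- Gradient structure of the discrete energy: regarding `E^N` as a function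
of `(x₁, …, x_N)` on `{x₁ < ⋯ < x_N < x₁ + L}` (with conventions `x₀ = x_N − L`,
`x_{N+1} = x₁ + L`, implemented by the periodic extension `extPer`), its partial derivative in
the `i`-th coordinate is `∂E^N/∂x_i = a·f_i` with `a = 1/N`. -/
theorem stmt_10 (N : ℕ) (hN : 2 ≤ N) (L : ℝ) (hL : 0 < L) (v : ℤ → ℝ)
    (hmono : ∀ i : ℤ, 1 ≤ i → i ≤ (N:ℤ) - 1 → v i < v (i + 1))
    (hlast : v (N:ℤ) < v 1 + L)
    (i : ℤ) (hi1 : 1 ≤ i) (hiN : i ≤ (N:ℤ)) :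
    HasDerivAt (fun s : ℝ => energyN N L (extPer N L (Function.update v i s)))
      ((N:ℝ)⁻¹ * fchem N L (extPer N L v) i) (v i) := by
  have hNpos : 0 < N := by omega
  have hNz : ((N:ℝ)) ≠ 0 := Nat.cast_ne_zero.mpr (by omega)
  have hLz : L ≠ 0 := hL.ne'
  set c : ℤ → ℝ := extPer N L v with hcdef
  have hck : ∀ k : ℤ, 1 ≤ k → k ≤ (N:ℤ) → c k = v k := fun k h1 h2 => extPer_eq N L v k h1 h2
  have hchain : ∀ p q : ℤ, 1 ≤ p → p < q → q ≤ (N:ℤ) → v p < v q := by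
    intro p q hp hpq hq
    have H := Int.le_induction (motive := fun r _ => r ≤ (N:ℤ) → v p < v r) (m := p+1)
      (fun h => hmono p hp (by omega))
      (fun n hn ih h => lt_trans (ih (by omega)) (hmono n (by omega) (by omega)))
    exact H q (by omega) hq
  have hle : ∀ p q : ℤ, 1 ≤ p → p ≤ q → q ≤ (N:ℤ) → v p ≤ v q := by
    intro p q hp hpq hq
    rcases eq_or_lt_of_le hpq with h | h
    · rw [h]
    · exact (hchain p q hp h hq).le
  have hcN1 : c ((N:ℤ) + 1) = v 1 + L := by
    have e : ((N:ℤ)+1) = 1 + (N:ℤ) := by ring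
    rw [hcdef, e, extPer_add N hNpos L v 1, extPer_eq N L v 1 le_rfl (by omega)]
  have hc0 : c (0:ℤ) = v (N:ℤ) - L := by
    have := extPer_add N hNpos L v 0
    rw [zero_add] at this
    rw [hcdef]
    rw [hcdef] at hck
    rw [hck (N:ℤ) (by omega) le_rfl] at this
    linarith
  have hgap : ∀ p : ℤ, 1 ≤ p → p ≤ (N:ℤ) → 0 < c (p+1) - c p := by
    intro p h1 h2
    rcases eq_or_lt_of_le h2 with h | h
    · rw [h, hcN1, hck (N:ℤ) (by omega) le_rfl]
      linarith
    · rw [hck (p+1) (by omega) (by omega), hck p h1 (by omega)]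
      have := hmono p h1 (by omega)
      linarith
  have hsin_ne : ∀ p q : ℤ, 1 ≤ p → p < q → q ≤ (N:ℤ) →
      Real.sin (π * (c q - c p) / L) ≠ 0 := by
    intro p q h1 h2 h3
    rw [hck q (by omega) h3, hck p h1 (by omega)]
    have hpos : 0 < v q - v p := by have := hchain p q h1 h2 h3; linarith
    have hlt : v q - v p < L := by
      have h4 := hle 1 p le_rfl h1 (by omega)
      have h5 := hle q (N:ℤ) (by omega) h3 le_rfl
      linarith
    have harg1 : 0 < π * (v q - v p) / L := by positivity
    have harg2 : π * (v q - v p) / L < π := by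
      rw [div_lt_iff₀ hL]
      nlinarith [Real.pi_pos]
    exact (Real.sin_pos_of_pos_of_lt_pi harg1 harg2).ne'
  -- derivative of the pair-interaction double sum
  have H1 : HasDerivAt (fun s => ∑ p ∈ Finset.Icc (1:ℤ) (N:ℤ), ∑ q ∈ Finset.Ioc p (N:ℤ),
        (2/L) * Real.log |Real.sin (π * (extPer N L (Function.update v i s) q
          - extPer N L (Function.update v i s) p) / L)|)
      (∑ p ∈ Finset.Icc (1:ℤ) (N:ℤ), ∑ q ∈ Finset.Ioc p (N:ℤ),
        (2/L) * (Real.cot (π * (c q - c p) / L) * (π * (indC N i q - indC N i p) / L))) (v i) := by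
    apply HasDerivAt.fun_sum
    intro p hp
    apply HasDerivAt.fun_sum
    intro q hq
    simp only [Finset.mem_Icc] at hp
    simp only [Finset.mem_Ioc] at hq
    refine hasDerivAt_logabs_sin L (fun s => π * (extPer N L (Function.update v i s) q
        - extPer N L (Function.update v i s) p) / L) ?_ ?_ (hsin_ne p q hp.1 (by omega) hq.2)
    · exact (((hasDerivAt_extPer N L v i q (v i)).sub
        (hasDerivAt_extPer N L v i p (v i))).const_mul π).div_const L
    · simp only [Function.update_eq_self, hcdef]
  -- derivative of the nearest-neighbour sum
  have H2 : HasDerivAt (fun s => ∑ p ∈ Finset.Icc (1:ℤ) (N:ℤ),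
        (-Real.log ((extPer N L (Function.update v i s) (p+1)
            - extPer N L (Function.update v i s) p) * (N:ℝ))
          + ((N:ℝ)⁻¹ ^ 2 / 2) / (extPer N L (Function.update v i s) (p+1)
            - extPer N L (Function.update v i s) p) ^ 2))
      (∑ p ∈ Finset.Icc (1:ℤ) (N:ℤ),
        (-(1/(c (p+1) - c p)) - (N:ℝ)⁻¹ ^ 2 / (c (p+1) - c p)^3)
          * (indC N i (p+1) - indC N i p)) (v i) := by
    apply HasDerivAt.fun_sum
    intro p hp
    simp only [Finset.mem_Icc] at hp
    refine hasDerivAt_step ((N:ℝ)⁻¹ ^ 2) (N:ℝ)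
      (fun s => extPer N L (Function.update v i s) (p+1)
        - extPer N L (Function.update v i s) p) ?_ ?_ (hgap p hp.1 hp.2).ne' hNz
    · exact (hasDerivAt_extPer N L v i (p+1) (v i)).sub (hasDerivAt_extPer N L v i p (v i))
    · simp only [Function.update_eq_self, hcdef]
  have HE := (H1.const_mul ((N:ℝ)⁻¹ ^ 2)).add (H2.const_mul ((N:ℝ)⁻¹))
  have key : (N:ℝ)⁻¹ ^ 2 * (∑ p ∈ Finset.Icc (1:ℤ) (N:ℤ), ∑ q ∈ Finset.Ioc p (N:ℤ),
        (2/L) * (Real.cot (π * (c q - c p) / L) * (π * (indC N i q - indC N i p) / L)))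
      + (N:ℝ)⁻¹ * (∑ p ∈ Finset.Icc (1:ℤ) (N:ℤ),
        (-(1/(c (p+1) - c p)) - (N:ℝ)⁻¹ ^ 2 / (c (p+1) - c p)^3)
          * (indC N i (p+1) - indC N i p))
      = (N:ℝ)⁻¹ * fchem N L c i := by
    have hindC : ∀ k : ℤ, 1 ≤ k → k ≤ (N:ℤ) → indC N i k = if k = i then (1:ℝ) else 0 := by
      intro k h1 h2
      unfold indC
      rw [Int.emod_eq_of_lt (by omega) (by omega)]
      exact if_congr (by omega) rfl rfl
    set p₁ : ℤ := if i = 1 then (N:ℤ) else i - 1 with hp₁def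
    have hindC2 : ∀ p : ℤ, 1 ≤ p → p ≤ (N:ℤ) → indC N i (p+1) = if p = p₁ then (1:ℝ) else 0 := by
      intro p h1 h2
      unfold indC
      rw [show p + 1 - 1 = p from by ring]
      rcases eq_or_lt_of_le h2 with h | h
      · rw [h, Int.emod_self]
        refine if_congr ?_ rfl rfl
        rw [hp₁def]
        by_cases hi : i = 1
        · rw [if_pos hi]; omega
        · rw [if_neg hi]; omega
      · rw [Int.emod_eq_of_lt (by omega) (by omega)]
        refine if_congr ?_ rfl rfl
        rw [hp₁def]
        by_cases hi : i = 1
        · rw [if_pos hi]; omega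
        · rw [if_neg hi]; omega
    have hmemi : i ∈ Finset.Icc (1:ℤ) (N:ℤ) := Finset.mem_Icc.mpr ⟨hi1, hiN⟩
    have hmemp₁ : p₁ ∈ Finset.Icc (1:ℤ) (N:ℤ) := by
      by_cases hi : i = 1
      · rw [hp₁def, if_pos hi]; exact Finset.mem_Icc.mpr ⟨by omega, le_rfl⟩
      · rw [hp₁def, if_neg hi]; exact Finset.mem_Icc.mpr ⟨by omega, by omega⟩
    have hDS : (∑ p ∈ Finset.Icc (1:ℤ) (N:ℤ), ∑ q ∈ Finset.Ioc p (N:ℤ),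
        (2/L) * (Real.cot (π * (c q - c p) / L) * (π * (indC N i q - indC N i p) / L)))
        = (∑ p ∈ Finset.Ico (1:ℤ) i, 2*π/L^2 * Real.cot (π * (c i - c p) / L))
          - ∑ q ∈ Finset.Ioc i (N:ℤ), 2*π/L^2 * Real.cot (π * (c q - c i) / L) := by
      have step1 : ∀ p ∈ Finset.Icc (1:ℤ) (N:ℤ),
          (∑ q ∈ Finset.Ioc p (N:ℤ),
            (2/L) * (Real.cot (π * (c q - c p) / L) * (π * (indC N i q - indC N i p) / L)))
          = (∑ q ∈ Finset.Ioc p (N:ℤ),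
              ((if q = i then 2*π/L^2 * Real.cot (π * (c q - c p) / L) else 0)
              - (if p = i then 2*π/L^2 * Real.cot (π * (c q - c p) / L) else 0))) := by
        intro p hp
        refine Finset.sum_congr rfl fun q hq => ?_
        simp only [Finset.mem_Icc] at hp
        simp only [Finset.mem_Ioc] at hq
        rw [hindC q (by omega) hq.2, hindC p hp.1 hp.2]
        by_cases h1 : q = i <;> by_cases h2 : p = i
        · simp only [if_pos h1, if_pos h2]; ring
        · simp only [if_pos h1, if_neg h2]; ring
        · simp only [if_neg h1, if_pos h2]; ring
        · simp only [if_neg h1, if_neg h2]; ring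
      rw [Finset.sum_congr rfl step1,
        Finset.sum_congr rfl (fun p (_ : p ∈ Finset.Icc (1:ℤ) (N:ℤ)) => Finset.sum_sub_distrib _ _),
        Finset.sum_sub_distrib]
      congr 1
      · have e3 : ∀ p ∈ Finset.Icc (1:ℤ) (N:ℤ),
            (∑ q ∈ Finset.Ioc p (N:ℤ),
              if q = i then 2*π/L^2 * Real.cot (π * (c q - c p) / L) else 0)
            = (if p ∈ Finset.Ico (1:ℤ) i then 2*π/L^2 * Real.cot (π * (c i - c p) / L) else 0) := by
          intro p hp
          rw [Finset.sum_ite_eq']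
          simp only [Finset.mem_Icc] at hp
          refine if_congr ?_ rfl rfl
          simp only [Finset.mem_Ioc, Finset.mem_Ico]
          omega
        rw [Finset.sum_congr rfl e3, Finset.sum_ite_mem]
        have : Finset.Icc (1:ℤ) (N:ℤ) ∩ Finset.Ico (1:ℤ) i = Finset.Ico (1:ℤ) i := by
          ext x; simp only [Finset.mem_inter, Finset.mem_Icc, Finset.mem_Ico]; omega
        rw [this]
      · have e4 : ∀ p ∈ Finset.Icc (1:ℤ) (N:ℤ),
            (∑ q ∈ Finset.Ioc p (N:ℤ),
              if p = i then 2*π/L^2 * Real.cot (π * (c q - c p) / L) else 0)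
            = (if p = i then
                ∑ q ∈ Finset.Ioc p (N:ℤ), 2*π/L^2 * Real.cot (π * (c q - c p) / L) else 0) := by
          intro p _
          by_cases h : p = i <;> simp [h]
        rw [Finset.sum_congr rfl e4, Finset.sum_ite_eq', if_pos hmemi]
    have hgap2 : c (p₁ + 1) - c p₁ = c i - c (i - 1) := by
      by_cases hi : i = 1
      · rw [hp₁def, if_pos hi, hi, hcN1, hck (N:ℤ) (by omega) le_rfl,
          show (1:ℤ) - 1 = 0 from by norm_num, hc0, hck 1 le_rfl (by omega)]
        ring
      · rw [hp₁def, if_neg hi, show i - 1 + 1 = i from by ring]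
    have hB : (∑ p ∈ Finset.Icc (1:ℤ) (N:ℤ),
        (-(1/(c (p+1) - c p)) - (N:ℝ)⁻¹ ^ 2 / (c (p+1) - c p)^3) * (indC N i (p+1) - indC N i p))
        = (-(1/(c i - c (i-1))) - (N:ℝ)⁻¹ ^ 2 / (c i - c (i-1))^3)
          - (-(1/(c (i+1) - c i)) - (N:ℝ)⁻¹ ^ 2 / (c (i+1) - c i)^3) := by
      have step : ∀ p ∈ Finset.Icc (1:ℤ) (N:ℤ),
          (-(1/(c (p+1) - c p)) - (N:ℝ)⁻¹ ^ 2 / (c (p+1) - c p)^3) * (indC N i (p+1) - indC N i p)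
          = (if p = p₁ then (-(1/(c (p+1) - c p)) - (N:ℝ)⁻¹ ^ 2 / (c (p+1) - c p)^3) else 0)
            - (if p = i then (-(1/(c (p+1) - c p)) - (N:ℝ)⁻¹ ^ 2 / (c (p+1) - c p)^3) else 0) := by
        intro p hp
        simp only [Finset.mem_Icc] at hp
        rw [hindC2 p hp.1 hp.2, hindC p hp.1 hp.2]
        by_cases h1 : p = p₁ <;> by_cases h2 : p = i
        · simp only [if_pos h1, if_pos h2]; ring
        · simp only [if_pos h1, if_neg h2]; ring
        · simp only [if_neg h1, if_pos h2]; ring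
        · simp only [if_neg h1, if_neg h2]; ring
      rw [Finset.sum_congr rfl step, Finset.sum_sub_distrib,
        Finset.sum_ite_eq', Finset.sum_ite_eq', if_pos hmemp₁, if_pos hmemi, hgap2]
    have hW : (∑ j ∈ Finset.Ico (i + 1) (i + (N:ℤ)), Real.cot (π * (c j - c i) / L))
        = (∑ q ∈ Finset.Ioc i (N:ℤ), Real.cot (π * (c q - c i) / L))
          + ∑ p ∈ Finset.Ico (1:ℤ) i, Real.cot (π * (c p - c i) / L) := by
      have hunion : Finset.Ico (i+1) (i+(N:ℤ))
          = Finset.Ioc i (N:ℤ) ∪ Finset.Ico ((N:ℤ)+1) (i+(N:ℤ)) := by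
        ext x; simp only [Finset.mem_Ico, Finset.mem_union, Finset.mem_Ioc]; omega
      have hdisj : Disjoint (Finset.Ioc i (N:ℤ)) (Finset.Ico ((N:ℤ)+1) (i+(N:ℤ))) := by
        simp only [Finset.disjoint_left, Finset.mem_Ioc, Finset.mem_Ico]
        intro x hx hx2; omega
      rw [hunion, Finset.sum_union hdisj]
      congr 1
      have hmap : Finset.map (addRightEmbedding (N:ℤ)) (Finset.Ico 1 i)
          = Finset.Ico ((N:ℤ)+1) (i+(N:ℤ)) := by
        rw [Finset.map_add_right_Ico, add_comm 1 (N:ℤ)]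
      rw [← hmap, Finset.sum_map]
      refine Finset.sum_congr rfl fun p hp => ?_
      simp only [addRightEmbedding_apply]
      have hcp : c (p + (N:ℤ)) = c p + L := by rw [hcdef]; exact extPer_add N hNpos L v p
      have harg : π * (c p + L - c i)/L = π * (c p - c i)/L + π := by field_simp; ring
      rw [hcp, harg, cot_add_pi]
    have hflip : (∑ p ∈ Finset.Ico (1:ℤ) i, 2*π/L^2 * Real.cot (π * (c i - c p) / L))
        = -∑ p ∈ Finset.Ico (1:ℤ) i, 2*π/L^2 * Real.cot (π * (c p - c i) / L) := by
      rw [← Finset.sum_neg_distrib]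
      refine Finset.sum_congr rfl fun p hp => ?_
      rw [show π * (c i - c p)/L = -(π * (c p - c i)/L) from by ring, cot_neg']
      ring
    rw [hDS, hB]
    simp only [fchem]
    rw [hW, hflip, ← Finset.mul_sum, ← Finset.mul_sum]
    ring
  rw [key] at HE
  simp only [energyN]
  exact HE
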